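/- Let (W,S) be a Coxeter system with S finite and W infinite. For a subset T ⊆ S define E(T) to be the sum, over all strictly increasing chains S₀ ⊊ S₁ ⊊ ⋯ ⊊ S_k of subsets of T (k ≥ 0, allowing S₀ = ∅) such that the standard parabolic subgroup ⟨S_k⟩ is finite (equivalently, every ⟨S_i⟩ is finite), of (−1)^k / |⟨S₀⟩|. Then Σ_{Δ ⊆ S} (−1)^{|Δ|} · E(S ∖ Δ) = 0, the sum ranging over all subsets Δ of S. -/

import Mathlib

private lemma subset_getLastI {B : Type*} :
    ∀ {l : List (Finset B)}, l.Chain' (· ⊂ ·) → ∀ A ∈ l, A ⊆ l.getLastI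
  | [], _, A, hA => absurd hA (by simp)
  | [a], _, A, hA => by
      simp only [List.mem_singleton] at hA
      simp [List.getLastI, hA]
  | a :: b :: t, hc, A, hA => by
      have hab : a ⊂ b := hc.rel_head
      have hc' : (b :: t).Chain' (· ⊂ ·) := hc.tail
      have hgl : (a :: b :: t).getLastI = (b :: t).getLastI := by
        rw [List.getLastI_eq_getLast?, List.getLastI_eq_getLast?, List.getLast?_cons_cons]
      rw [hgl]
      rcases List.mem_cons.mp hA with rfl | hA
      · exact hab.subset.trans (subset_getLastI hc' b List.mem_cons_self)
      · exact subset_getLastI hc' A hA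

private lemma getLastI_mem {B : Type*} {l : List (Finset B)} (h : l ≠ []) : l.getLastI ∈ l := by
  rw [List.getLastI_eq_getLast?, List.getLast?_eq_getLast_of_ne_nil h]
  exact List.getLast_mem h

/-- `chainSum cs T` is the sum, over all strictly increasing chains `S₀ ⊊ ⋯ ⊊ S_k` of
subsets of `T` (encoded as lists `[S₀, …, S_k]`) whose top parabolic subgroup `⟨S_k⟩` is
finite, of `(−1)^k / |⟨S₀⟩|`. -/
noncomputable def chainSum {B : Type*} {W : Type*} [Group W]
    (M : CoxeterMatrix B) (cs : CoxeterSystem M W) (T : Finset B) : ℚ :=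
  ∑ᶠ l ∈ {l : List (Finset B) | l ≠ [] ∧ List.Chain' (· ⊂ ·) l ∧ (∀ A ∈ l, A ⊆ T) ∧
      (Subgroup.closure (cs.simple '' ↑(l.getLastI)) : Set W).Finite},
    ((-1 : ℚ) ^ (l.length - 1) /
      (Nat.card ↥(Subgroup.closure (cs.simple '' ↑(l.headI))) : ℚ))

/-- Serre's closed form: for an infinite Coxeter group `(W,S)`,
`Σ_{Δ ⊆ S} (−1)^{|Δ|} E(S∖Δ) = 0`. -/
theorem coxeter_serre_closed_form
    {B : Type*} [Fintype B] [DecidableEq B] {W : Type*} [Group W] [Infinite W]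
    (M : CoxeterMatrix B) (cs : CoxeterSystem M W) :
    ∑ Δ : Finset B, (-1 : ℚ) ^ Δ.card * chainSum M cs (Finset.univ \ Δ) = 0 := by
  classical
  set w : List (Finset B) → ℚ := fun l => (-1 : ℚ) ^ (l.length - 1) /
      (Nat.card ↥(Subgroup.closure (cs.simple '' ↑(l.headI))) : ℚ) with hw
  have hfin : {l : List (Finset B) | l ≠ [] ∧ List.Chain' (· ⊂ ·) l ∧
      (Subgroup.closure (cs.simple '' ↑(l.getLastI)) : Set W).Finite}.Finite := by
    apply (List.finite_length_le (Finset B) (Fintype.card (Finset B))).subset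
    rintro l ⟨-, hc, -⟩
    have hnd : l.Nodup := (List.isChain_iff_pairwise.mp hc).imp (fun h => h.ne)
    exact hnd.length_le_card
  set F := hfin.toFinset with hF
  have key : ∀ T : Finset B, chainSum M cs T =
      ∑ l ∈ F.filter (fun l => l.getLastI ⊆ T), w l := by
    intro T
    have hsT : {l : List (Finset B) | l ≠ [] ∧ List.Chain' (· ⊂ ·) l ∧ (∀ A ∈ l, A ⊆ T) ∧
        (Subgroup.closure (cs.simple '' ↑(l.getLastI)) : Set W).Finite}.Finite := by
      apply hfin.subset
      rintro l ⟨h1, h2, _, h4⟩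
      exact ⟨h1, h2, h4⟩
    rw [chainSum, finsum_mem_eq_finite_toFinset_sum _ hsT]
    apply Finset.sum_congr _ (fun _ _ => rfl)
    ext l
    simp only [Set.Finite.mem_toFinset, Set.mem_setOf_eq, Finset.mem_filter, hF]
    constructor
    · rintro ⟨h1, h2, h3, h4⟩
      exact ⟨⟨h1, h2, h4⟩, h3 _ (getLastI_mem h1)⟩
    · rintro ⟨⟨h1, h2, h4⟩, h3⟩
      exact ⟨h1, h2, fun A hA => (subset_getLastI h2 A hA).trans h3, h4⟩
  calc ∑ Δ : Finset B, (-1 : ℚ) ^ Δ.card * chainSum M cs (Finset.univ \ Δ)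
      = ∑ Δ : Finset B, ∑ l ∈ F, if l.getLastI ⊆ Finset.univ \ Δ
          then (-1 : ℚ) ^ Δ.card * w l else 0 := by
        simp [key, Finset.mul_sum, Finset.sum_filter]
    _ = ∑ l ∈ F, ∑ Δ : Finset B, if l.getLastI ⊆ Finset.univ \ Δ
          then (-1 : ℚ) ^ Δ.card * w l else 0 := Finset.sum_comm
    _ = 0 := by
        apply Finset.sum_eq_zero
        intro l hl
        rw [hF, Set.Finite.mem_toFinset] at hl
        obtain ⟨h1, h2, h4⟩ := hl
        have hne : l.getLastIᶜ ≠ ∅ := by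
          intro hempty
          have huniv : l.getLastI = Finset.univ := by
            rwa [Finset.compl_eq_empty_iff] at hempty
          rw [huniv] at h4
          have : Subgroup.closure (cs.simple '' ↑(Finset.univ : Finset B)) = ⊤ := by
            rw [Finset.coe_univ, Set.image_univ, cs.subgroup_closure_range_simple]
          rw [this] at h4
          exact Set.infinite_univ (α := W) (by simpa using h4)
        have hcond : ∀ Δ : Finset B, (l.getLastI ⊆ Finset.univ \ Δ) ↔ Δ ∈ (l.getLastIᶜ).powerset := by
          intro Δ
          rw [Finset.mem_powerset, ← Finset.compl_eq_univ_sdiff, Finset.subset_compl_comm]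
        simp only [hcond]
        rw [Finset.sum_ite_mem, Finset.univ_inter, ← Finset.sum_mul]
        have h0 : (∑ m ∈ (l.getLastIᶜ).powerset, (-1 : ℚ) ^ m.card) = 0 := by
          exact_mod_cast Finset.sum_powerset_neg_one_pow_card_of_nonempty
            (Finset.nonempty_iff_ne_empty.mpr hne)
        rw [h0, zero_mul]
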